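/- Let L > 0, let s : ℝ → ℝ be continuous and L-periodic with s(x) ≤ 0 for all x ∈ ℝ, let u : ℝ → ℂ be twice continuously differentiable, L-periodic and not identically zero, and let λ ∈ ℝ satisfy u''(x) + s(x)·u(x) = -λ·u(x) for all x ∈ ℝ. Then λ ≥ 0. -/

import Mathlib

open MeasureTheory intervalIntegral Complex Function Set

theorem stmt_0 (L : ℝ) (hL : 0 < L)
    (s : ℝ → ℝ) (hs_cont : Continuous s) (hs_per : ∀ x : ℝ, s (x + L) = s x)
    (hs_neg : ∀ x : ℝ, s x ≤ 0)
    (u : ℝ → ℂ) (hu : ContDiff ℝ 2 u) (hu_per : ∀ x : ℝ, u (x + L) = u x)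
    (hu_ne : u ≠ 0)
    (lam : ℝ)
    (heig : ∀ x : ℝ, deriv (deriv u) x + (s x : ℂ) * u x = -(lam : ℂ) * u x) :
    0 ≤ lam := by
  -- smoothness facts
  have hdu : Differentiable ℝ u := hu.differentiable (by norm_num)
  have hcd1 : ContDiff ℝ 1 (deriv u) := by
    have h := contDiff_succ_iff_deriv.mp (show ContDiff ℝ (1 + 1) u by norm_num [hu])
    exact h.2.2
  have hdu' : Differentiable ℝ (deriv u) := hcd1.differentiable one_ne_zero
  have hcu' : Continuous (deriv u) := hdu'.continuous
  have hcu'' : Continuous (deriv (deriv u)) := hcd1.continuous_deriv le_rfl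
  have hcu : Continuous u := hdu.continuous
  -- second derivative formula
  have h2nd : ∀ x, deriv (deriv u) x = ((-(lam + s x) : ℝ) : ℂ) * u x := by
    intro x
    push_cast
    linear_combination heig x
  -- periodicity of deriv u
  have h1 : (fun y => u (y + L)) = u := funext hu_per
  have hper' : deriv u L = deriv u 0 := by
    have h := deriv_comp_add_const (f := u) (a := L) (x := (0:ℝ))
    rw [h1] at h
    simpa using h.symm
  -- FTC / integration by parts
  have hg : ∀ x : ℝ, HasDerivAt (fun y => (starRingEnd ℂ) (u y) * deriv u y)
      ((starRingEnd ℂ) (deriv u x) * deriv u x + (starRingEnd ℂ) (u x) * deriv (deriv u) x) x :=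
    fun x => ((hdu x).hasDerivAt.star.mul (hdu' x).hasDerivAt)
  have key : ∫ x in (0:ℝ)..L,
      (Complex.normSq (deriv u x) - (lam + s x) * Complex.normSq (u x) : ℝ) = 0 := by
    have hF : ∀ x ∈ Set.uIcc (0:ℝ) L, HasDerivAt (fun y => (starRingEnd ℂ) (u y) * deriv u y)
        (((Complex.normSq (deriv u x) - (lam + s x) * Complex.normSq (u x) : ℝ) : ℂ)) x := by
      intro x _
      convert hg x using 1
      rw [h2nd x]
      push_cast
      rw [show ((Complex.normSq (deriv u x) : ℂ)) = (starRingEnd ℂ) (deriv u x) * deriv u x from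
        Complex.normSq_eq_conj_mul_self,
        show ((Complex.normSq (u x) : ℂ)) = (starRingEnd ℂ) (u x) * u x from
        Complex.normSq_eq_conj_mul_self]
      ring
    have hIntC : IntervalIntegrable
        (fun x => ((Complex.normSq (deriv u x) - (lam + s x) * Complex.normSq (u x) : ℝ) : ℂ))
        volume 0 L := by
      apply Continuous.intervalIntegrable
      continuity
    have hfc := intervalIntegral.integral_eq_sub_of_hasDerivAt hF hIntC
    have hbd : (starRingEnd ℂ) (u L) * deriv u L - (starRingEnd ℂ) (u 0) * deriv u 0 = 0 := by
      have := hu_per 0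
      simp only [zero_add] at this
      rw [this, hper', sub_self]
    rw [hbd] at hfc
    have := intervalIntegral.integral_ofReal
      (f := fun x => (Complex.normSq (deriv u x) - (lam + s x) * Complex.normSq (u x) : ℝ))
      (a := (0:ℝ)) (b := L) (μ := volume)
    rw [this] at hfc
    exact_mod_cast hfc
  -- integrability facts
  have hA : IntervalIntegrable (fun x => Complex.normSq (deriv u x)) volume 0 L :=
    (Complex.continuous_normSq.comp hcu').intervalIntegrable 0 L
  have hB : IntervalIntegrable (fun x => Complex.normSq (u x)) volume 0 L :=
    (Complex.continuous_normSq.comp hcu).intervalIntegrable 0 L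
  have hSB : IntervalIntegrable (fun x => s x * Complex.normSq (u x)) volume 0 L :=
    (hs_cont.mul (Complex.continuous_normSq.comp hcu)).intervalIntegrable 0 L
  have hLB : IntervalIntegrable (fun x => lam * Complex.normSq (u x)) volume 0 L :=
    (continuous_const.mul (Complex.continuous_normSq.comp hcu)).intervalIntegrable 0 L
  -- rearrange key
  have split : (∫ x in (0:ℝ)..L, Complex.normSq (deriv u x))
      - (lam * ∫ x in (0:ℝ)..L, Complex.normSq (u x))
      - (∫ x in (0:ℝ)..L, s x * Complex.normSq (u x)) = 0 := by
    rw [← intervalIntegral.integral_const_mul, ← intervalIntegral.integral_sub hA hLB,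
      ← intervalIntegral.integral_sub (hA.sub hLB) hSB]
    rw [← key]
    congr 1
    funext x
    ring
  have hApos : 0 ≤ ∫ x in (0:ℝ)..L, Complex.normSq (deriv u x) :=
    intervalIntegral.integral_nonneg hL.le (fun x _ => Complex.normSq_nonneg _)
  have hSneg : (∫ x in (0:ℝ)..L, s x * Complex.normSq (u x)) ≤ 0 := by
    have := intervalIntegral.integral_nonneg (μ := volume) (f := fun x => -(s x * Complex.normSq (u x)))
      hL.le (fun x _ => neg_nonneg.mpr
        (mul_nonpos_of_nonpos_of_nonneg (hs_neg x) (Complex.normSq_nonneg (u x))))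
    rw [intervalIntegral.integral_neg] at this
    linarith
  -- positivity of ∫ normSq u
  have hBpos : 0 < ∫ x in (0:ℝ)..L, Complex.normSq (u x) := by
    obtain ⟨x₀, hx₀⟩ : ∃ x, u x ≠ 0 := by
      by_contra h
      push_neg at h
      exact hu_ne (funext h)
    have hper : Function.Periodic u L := hu_per
    set y := x₀ - (⌊x₀ / L⌋ : ℤ) * L with hy
    have hy0 : 0 ≤ y := by
      have h := (le_div_iff₀ hL).mp (Int.floor_le (x₀ / L))
      rw [hy]; linarith
    have hyL : y < L := by
      have h := (div_lt_iff₀ hL).mp (Int.lt_floor_add_one (x₀ / L))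
      rw [hy]; nlinarith
    have huy : u y ≠ 0 := by
      rw [hy, hper.sub_int_mul_eq]
      exact hx₀
    rw [intervalIntegral.integral_pos_iff_support_of_nonneg_ae
      (Filter.Eventually.of_forall fun x => Complex.normSq_nonneg (u x)) hB]
    refine ⟨hL, ?_⟩
    have hopen : IsOpen {x | u x ≠ 0} := isOpen_compl_iff.mpr (isClosed_eq hcu continuous_const)
    obtain ⟨ε, hε, hball⟩ := Metric.isOpen_iff.mp hopen y huy
    have hsub : Set.Ioo y (min (y + ε) L) ⊆ Function.support (fun x => Complex.normSq (u x)) ∩ Set.Ioc 0 L := by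
      intro z hz
      constructor
      · have hz' : z ∈ Metric.ball y ε := by
          rw [Metric.mem_ball, Real.dist_eq, abs_lt]
          constructor
          · linarith [hz.1, lt_min_iff.mp hz.2]
          · have := (lt_min_iff.mp hz.2).1
            linarith
        have := hball hz'
        simpa [Function.mem_support, Complex.normSq_eq_zero] using this
      · exact ⟨lt_of_le_of_lt hy0 hz.1, (lt_min_iff.mp hz.2).2.le⟩
    have hlt : y < min (y + ε) L := lt_min (by linarith) hyL
    calc (0 : ENNReal) < volume (Set.Ioo y (min (y + ε) L)) := by
          rw [Real.volume_Ioo]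
          exact ENNReal.ofReal_pos.mpr (by linarith)
      _ ≤ _ := measure_mono hsub
  by_contra hneg
  push_neg at hneg
  nlinarith [split, hApos, hSneg, hBpos, mul_pos (neg_pos.mpr hneg) hBpos]
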